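/- Every eigenvalue λ of a threshold graph with λ ≠ 0 and λ ≠ -1 is simple (has multiplicity 1). -/

import Mathlib

open scoped Classical

noncomputable section

/-- The real adjacency matrix of a finite simple graph. -/
def adjM {V : Type*} [Fintype V] (G : SimpleGraph V) : Matrix V V ℝ :=
  G.adjMatrix ℝ

/-- The multiplicity of `μ` as an eigenvalue of the adjacency matrix of `G`
(the dimension of the corresponding eigenspace; `0` if `μ` is not an eigenvalue). -/
def eigMult {V : Type*} [Fintype V] (G : SimpleGraph V) (μ : ℝ) : ℕ :=
  Module.finrank ℝ (Module.End.eigenspace (Matrix.toLin' (adjM G)) μ)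

/-- `μ` is an eigenvalue of the adjacency matrix of `G`. -/
def HasEig {V : Type*} [Fintype V] (G : SimpleGraph V) (μ : ℝ) : Prop :=
  Module.End.HasEigenvalue (Matrix.toLin' (adjM G)) μ

/-- A cograph: no induced path on four vertices. -/
def IsCograph {V : Type*} (G : SimpleGraph V) : Prop :=
  IsEmpty (SimpleGraph.pathGraph 4 ↪g G)

/-- A duplication class: a maximal set of more than one vertex, all with the same
open neighborhood. -/
def IsDupClass {V : Type*} (G : SimpleGraph V) (S : Set V) : Prop :=
  1 < S.ncard ∧ (∀ u ∈ S, ∀ v ∈ S, G.neighborSet u = G.neighborSet v) ∧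
    ∀ T : Set V, S ⊆ T → (∀ u ∈ T, ∀ v ∈ T, G.neighborSet u = G.neighborSet v) → T = S

/-- A coduplication class: a maximal set of more than one vertex, all with the same
closed neighborhood. -/
def IsCodupClass {V : Type*} (G : SimpleGraph V) (S : Set V) : Prop :=
  1 < S.ncard ∧
    (∀ u ∈ S, ∀ v ∈ S, insert u (G.neighborSet u) = insert v (G.neighborSet v)) ∧
    ∀ T : Set V, S ⊆ T →
      (∀ u ∈ T, ∀ v ∈ T, insert u (G.neighborSet u) = insert v (G.neighborSet v)) → T = S

/-- A threshold graph: simultaneously a cograph and a split graph. -/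
def IsThreshold {V : Type*} (G : SimpleGraph V) : Prop :=
  IsCograph G ∧ ∃ K I : Set V, K ∪ I = Set.univ ∧ Disjoint K I ∧
    G.IsClique K ∧ Gᶜ.IsClique I

namespace ThrAux
open SimpleGraph Finset
variable {V : Type*}

def vic (G : SimpleGraph V) (u v : V) : Prop :=
  ∀ a : V, G.Adj u a → a ≠ v → G.Adj v a

lemma vic_refl (G : SimpleGraph V) (u : V) : vic G u u := fun _ h _ => h

lemma vic_trans {G : SimpleGraph V} {u v w : V} (huv : vic G u v) (hvw : vic G v w) :
    vic G u w := by
  intro a hua haw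
  by_cases huw : u = w
  · exact huw ▸ hua
  by_cases hav : a = v
  · subst hav
    have hwu : G.Adj w u := hvw u hua.symm huw
    exact (huv w hwu.symm (fun h => haw h.symm)).symm
  · exact hvw a (huv a hua hav) haw

lemma no_p4 {G : SimpleGraph V} (hC : IsCograph G) {x0 x1 x2 x3 : V}
    (h01 : G.Adj x0 x1) (h12 : G.Adj x1 x2) (h23 : G.Adj x2 x3)
    (h02 : ¬G.Adj x0 x2) (h13 : ¬G.Adj x1 x3) (h03 : ¬G.Adj x0 x3)
    (n02 : x0 ≠ x2) (n13 : x1 ≠ x3) (n03 : x0 ≠ x3) : False := by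
  have n01 : x0 ≠ x1 := h01.ne
  have n12 : x1 ≠ x2 := h12.ne
  have n23 : x2 ≠ x3 := h23.ne
  have h20 : ¬G.Adj x2 x0 := fun h => h02 h.symm
  have h31 : ¬G.Adj x3 x1 := fun h => h13 h.symm
  have h30 : ¬G.Adj x3 x0 := fun h => h03 h.symm
  refine hC.false ?_
  refine ⟨⟨![x0, x1, x2, x3], ?_⟩, ?_⟩
  · intro a b hab
    fin_cases a <;> fin_cases b <;> simp_all
  · intro a b
    change G.Adj (![x0, x1, x2, x3] a) (![x0, x1, x2, x3] b) ↔ _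
    fin_cases a <;> fin_cases b <;>
      simp [SimpleGraph.pathGraph_adj, h01, h12, h23, h01.symm, h12.symm, h23.symm,
        h02, h13, h03, h20, h31, h30, G.irrefl] <;> decide

/-- membership dichotomy for a split partition -/
lemma mem_or {K I : Set V} (hU : K ∪ I = Set.univ) (x : V) : x ∈ K ∨ x ∈ I := by
  have : x ∈ K ∪ I := hU ▸ Set.mem_univ x
  exact this

/-- no induced 2K2 in a split graph: edges x-y and z-w, no cross edges -/
lemma no_2k2 {G : SimpleGraph V} {K I : Set V} (hU : K ∪ I = Set.univ)
    (hK : G.IsClique K) (hI : Gᶜ.IsClique I) {x y z w : V}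
    (hxy : G.Adj x y) (hzw : G.Adj z w)
    (hxz : ¬G.Adj x z) (hxw : ¬G.Adj x w) (hyz : ¬G.Adj y z) (hyw : ¬G.Adj y w)
    (nxz : x ≠ z) (nxw : x ≠ w) (nyz : y ≠ z) (nyw : y ≠ w) : False := by
  have hIind : ∀ {a b}, a ∈ I → b ∈ I → G.Adj a b → False := fun ha hb hab =>
    ((G.compl_adj _ _).mp (hI ha hb hab.ne)).2 hab
  have h1 : x ∈ K ∨ y ∈ K := by
    rcases mem_or hU x with hx | hx
    · exact Or.inl hx
    rcases mem_or hU y with hy | hy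
    · exact Or.inr hy
    · exact absurd hxy (fun h => hIind hx hy h)
  have h2 : z ∈ K ∨ w ∈ K := by
    rcases mem_or hU z with hz | hz
    · exact Or.inl hz
    rcases mem_or hU w with hw | hw
    · exact Or.inr hw
    · exact absurd hzw (fun h => hIind hz hw h)
  rcases h1 with h1 | h1 <;> rcases h2 with h2 | h2
  · exact hxz (hK h1 h2 nxz)
  · exact hxw (hK h1 h2 nxw)
  · exact hyz (hK h1 h2 nyz)
  · exact hyw (hK h1 h2 nyw)

/-- no induced C4 in a split graph: nonedges x-y and z-w, all cross pairs adjacent -/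
lemma no_c4 {G : SimpleGraph V} {K I : Set V} (hU : K ∪ I = Set.univ)
    (hK : G.IsClique K) (hI : Gᶜ.IsClique I) {x y z w : V}
    (hxy : ¬G.Adj x y) (hzw : ¬G.Adj z w)
    (hxz : G.Adj x z) (hxw : G.Adj x w) (hyz : G.Adj y z) (hyw : G.Adj y w)
    (nxy : x ≠ y) (nzw : z ≠ w) : False := by
  have hIind : ∀ {a b}, a ∈ I → b ∈ I → G.Adj a b → False := fun ha hb hab =>
    ((G.compl_adj _ _).mp (hI ha hb hab.ne)).2 hab
  have h1 : x ∈ I ∨ y ∈ I := by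
    rcases mem_or hU x with hx | hx
    · rcases mem_or hU y with hy | hy
      · exact absurd (hK hx hy nxy) hxy
      · exact Or.inr hy
    · exact Or.inl hx
  have h2 : z ∈ I ∨ w ∈ I := by
    rcases mem_or hU z with hz | hz
    · rcases mem_or hU w with hw | hw
      · exact absurd (hK hz hw nzw) hzw
      · exact Or.inr hw
    · exact Or.inl hz
  rcases h1 with h1 | h1 <;> rcases h2 with h2 | h2
  · exact hIind h1 h2 hxz
  · exact hIind h1 h2 hxw
  · exact hIind h1 h2 hyz
  · exact hIind h1 h2 hyw

lemma vic_total {G : SimpleGraph V} (hT : IsThreshold G) (u v : V) :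
    vic G u v ∨ vic G v u := by
  by_contra hc
  push_neg at hc
  obtain ⟨h1, h2⟩ := hc
  unfold vic at h1 h2
  push_neg at h1 h2
  obtain ⟨a, hua, hav, hva⟩ := h1
  obtain ⟨b, hvb, hbu, hub⟩ := h2
  obtain ⟨hC, K, I, hU, _, hK, hI⟩ := hT
  have hab : a ≠ b := fun h => hva (h ▸ hvb)
  have hau : ¬G.Adj a v := fun h => hva h.symm
  have hbv : ¬G.Adj b u := fun h => hub h.symm
  by_cases huv : G.Adj u v
  · by_cases hADJ : G.Adj a b
    · exact no_c4 hU hK hI hub hau hua huv hADJ.symm hvb.symm (Ne.symm hbu) hav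
    · exact no_p4 hC hvb.symm huv.symm hua (fun h => hub h.symm) hva
        (fun h => hADJ h.symm) hbu (Ne.symm hav) (Ne.symm hab)
  · by_cases hADJ : G.Adj a b
    · exact no_p4 hC hua hADJ hvb.symm hub hau huv (Ne.symm hbu) hav
        (fun h => hva (h ▸ hua))
    · exact no_2k2 hU hK hI hua hvb huv hub hau hADJ
        (fun h => hva (h ▸ hua)) (Ne.symm hbu) hav hab

lemma exists_top_rel {r : V → V → Prop} (hrefl : ∀ x, r x x)
    (htrans : ∀ {a b c}, r a b → r b c → r a c)
    (htot : ∀ x y, r x y ∨ r y x) (s : Finset V) (hs : s.Nonempty) :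
    ∃ m ∈ s, ∀ x ∈ s, r x m := by
  classical
  induction s using Finset.induction_on with
  | empty => simp at hs
  | @insert a s ha ih =>
    rcases s.eq_empty_or_nonempty with rfl | hs'
    · exact ⟨a, by simp, by simp [hrefl]⟩
    · obtain ⟨m, hm, hmax⟩ := ih hs'
      rcases htot a m with h | h
      · refine ⟨m, Finset.mem_insert_of_mem hm, fun x hx => ?_⟩
        rcases Finset.mem_insert.mp hx with rfl | hx
        · exact h
        · exact hmax x hx
      · refine ⟨a, Finset.mem_insert_self _ _, fun x hx => ?_⟩
        rcases Finset.mem_insert.mp hx with rfl | hx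
        · exact hrefl _
        · exact htrans (hmax x hx) h

lemma exists_isol_or_dom [Fintype V] {G : SimpleGraph V} (hT : IsThreshold G)
    (hne : Nonempty V) :
    (∃ w : V, ∀ u, ¬ G.Adj w u) ∨ (∃ w : V, ∀ u, u ≠ w → G.Adj w u) := by
  classical
  obtain ⟨v₀, _, hv₀⟩ := exists_top_rel (vic_refl G) (fun h h' => vic_trans h h')
    (vic_total hT) Finset.univ (Finset.univ_nonempty)
  obtain ⟨u₀, _, hu₀⟩ := exists_top_rel (r := fun x y => vic G y x) (vic_refl G)
    (fun h h' => vic_trans h' h) (fun x y => (vic_total hT y x)) Finset.univ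
    (Finset.univ_nonempty)
  by_cases hiso : ∀ u, ¬ G.Adj u₀ u
  · exact Or.inl ⟨u₀, hiso⟩
  · push_neg at hiso
    obtain ⟨a, ha⟩ := hiso
    refine Or.inr ⟨v₀, fun u hu => ?_⟩
    by_cases hau : a = u
    · exact hv₀ u₀ (Finset.mem_univ _) u (hau ▸ ha) (hau ▸ hu)
    · have h1 : G.Adj u a := hu₀ u (Finset.mem_univ _) a ha hau
      exact hv₀ a (Finset.mem_univ _) u h1.symm hu

lemma threshold_induce {G : SimpleGraph V} (hT : IsThreshold G) (s : Set V) :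
    IsThreshold (G.induce s) := by
  obtain ⟨hC, K, I, hU, hD, hK, hI⟩ := hT
  constructor
  · exact ⟨fun f => hC.false ((SimpleGraph.Embedding.induce s).comp f)⟩
  · refine ⟨Subtype.val ⁻¹' K, Subtype.val ⁻¹' I, ?_, ?_, ?_, ?_⟩
    · apply Set.eq_univ_iff_forall.mpr
      intro x
      exact mem_or hU x.val
    · rw [Set.disjoint_left] at hD ⊢
      exact fun a ha ha' => hD ha ha'
    · intro x hx y hy hxy
      exact hK hx hy (fun h => hxy (Subtype.ext h))
    · intro x hx y hy hxy
      have h := (G.compl_adj _ _).mp (hI hx hy (fun h => hxy (Subtype.ext h)))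
      exact ((G.induce s).compl_adj _ _).mpr ⟨hxy, fun ha => h.2 (by simpa using ha)⟩

section Spectral
variable {V : Type*} [Fintype V]

lemma eig_apply {G : SimpleGraph V} {μ : ℝ} {z : V → ℝ}
    (h : (adjM G).mulVec z = μ • z) (u : V) :
    ∑ x ∈ G.neighborFinset u, z x = μ * z u := by
  have := congrFun h u
  rw [adjM, SimpleGraph.adjMatrix_mulVec_apply] at this
  exact this

lemma sum_subtype_ne (w : V) (f : V → ℝ) :
    ∑ x : ({w}ᶜ : Set V), f x.val = ∑ x ∈ Finset.univ.erase w, f x :=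
  (Finset.sum_subtype (p := fun x => x ∈ ({w}ᶜ : Set V)) (Finset.univ.erase w)
    (fun x => by simp) f).symm

lemma induce_neighbor_sum (G : SimpleGraph V) (w : V) (z : V → ℝ)
    (u : ({w}ᶜ : Set V)) :
    ∑ x ∈ (G.induce {w}ᶜ).neighborFinset u, z x.val
      = ∑ x ∈ (G.neighborFinset u.val).erase w, z x := by
  classical
  have h1 : (G.induce ({w}ᶜ : Set V)).neighborFinset u
      = Finset.univ.filter (fun x => (G.induce ({w}ᶜ : Set V)).Adj u x) := by
    ext x; simp [SimpleGraph.mem_neighborFinset]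
  rw [h1, Finset.sum_filter]
  have h2 : ∀ x : ({w}ᶜ : Set V),
      (if (G.induce ({w}ᶜ : Set V)).Adj u x then z x.val else 0)
        = (fun y : V => if G.Adj u.val y then z y else 0) x.val := by
    intro x
    by_cases h : G.Adj u.val x.val <;> simp [h, SimpleGraph.comap_adj]
  rw [Finset.sum_congr rfl (fun x _ => h2 x),
    sum_subtype_ne w (fun y : V => if G.Adj u.val y then z y else 0), ← Finset.sum_filter]
  congr 1
  ext x
  simp [SimpleGraph.mem_neighborFinset, Finset.mem_erase, Finset.mem_filter, and_comm]

end Spectral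

universe u

lemma key (μ : ℝ) (h0 : μ ≠ 0) (h1 : μ ≠ -1) :
    ∀ (n : ℕ) (V : Type u) (instV : Fintype V) (G : SimpleGraph V),
      Fintype.card V = n → IsThreshold G →
      (∀ z : V → ℝ, (adjM G).mulVec z = μ • z → ∑ x, z x = 0 → z = 0) ∧
      (Nonempty V → ∃ w : V, ∀ z : V → ℝ,
        (adjM G).mulVec z = μ • z → z w = 0 → z = 0) := by
  intro n
  induction n using Nat.strong_induction_on with
  | _ n IH =>
  intro V instV G hcard hT
  by_cases hne : Nonempty V
  swap
  · refine ⟨fun z _ _ => funext fun x => absurd ⟨x⟩ hne, fun h => absurd h hne⟩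
  have hnpos : 0 < n := hcard ▸ Fintype.card_pos
  rcases exists_isol_or_dom hT hne with ⟨w, hiso⟩ | ⟨w, hdom⟩
  · -- isolated vertex w
    have hT' := threshold_induce hT ({w}ᶜ : Set V)
    have hcard' : Fintype.card ({w}ᶜ : Set V) < n := by
      have hle : Fintype.card ({w}ᶜ : Set V) = Fintype.card V - 1 := by
        rw [Fintype.card_of_subtype (Finset.univ.erase w) (fun x => by simp),
          Finset.card_erase_of_mem (Finset.mem_univ w), Finset.card_univ]
      omega
    obtain ⟨IHa, IHb⟩ := IH _ hcard' ({w}ᶜ : Set V) inferInstance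
      (G.induce ({w}ᶜ : Set V)) rfl hT'
    have hNw : G.neighborFinset w = ∅ := by
      ext x; simp [SimpleGraph.mem_neighborFinset]; exact hiso x
    have hzw : ∀ z : V → ℝ, (adjM G).mulVec z = μ • z → z w = 0 := by
      intro z hz
      have h := eig_apply hz w
      rw [hNw, Finset.sum_empty] at h
      exact (mul_eq_zero.mp h.symm).resolve_left h0
    have hres : ∀ z : V → ℝ, (adjM G).mulVec z = μ • z →
        (adjM (G.induce ({w}ᶜ : Set V))).mulVec (fun x => z x.val)
          = μ • (fun x : ({w}ᶜ : Set V) => z x.val) := by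
      intro z hz
      funext x
      erw [adjM, SimpleGraph.adjMatrix_mulVec_apply, induce_neighbor_sum,
        Finset.erase_eq_of_notMem
          (by simp only [SimpleGraph.mem_neighborFinset]
              exact fun h => hiso _ h.symm),
        eig_apply hz x.val]
      simp
    constructor
    · intro z hz hsum
      have hw0 := hzw z hz
      have hsum' : ∑ x : ({w}ᶜ : Set V), z x.val = 0 := by
        rw [sum_subtype_ne w z]
        have h2 := Finset.sum_erase_add Finset.univ z (Finset.mem_univ w)
        rw [hw0, add_zero, hsum] at h2
        exact h2
      have hz0 := IHa _ (hres z hz) hsum'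
      funext x
      by_cases hx : x = w
      · exact hx ▸ hw0
      · exact congrFun hz0 ⟨x, by simp [hx]⟩
    · intro _
      by_cases hne' : Nonempty ({w}ᶜ : Set V)
      · obtain ⟨w', hw'⟩ := IHb hne'
        refine ⟨w'.val, fun z hz hzw' => ?_⟩
        have hz0 := hw' _ (hres z hz) hzw'
        funext x
        by_cases hx : x = w
        · exact hx ▸ hzw z hz
        · exact congrFun hz0 ⟨x, by simp [hx]⟩
      · refine ⟨w, fun z hz hzw' => ?_⟩
        funext x
        by_cases hx : x = w
        · exact hx ▸ hzw'
        · exact absurd ⟨⟨x, by simp [hx]⟩⟩ hne'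
  · -- dominating vertex w
    have hT' := threshold_induce hT ({w}ᶜ : Set V)
    have hcard' : Fintype.card ({w}ᶜ : Set V) < n := by
      have hle : Fintype.card ({w}ᶜ : Set V) = Fintype.card V - 1 := by
        rw [Fintype.card_of_subtype (Finset.univ.erase w) (fun x => by simp),
          Finset.card_erase_of_mem (Finset.mem_univ w), Finset.card_univ]
      omega
    obtain ⟨IHa, _⟩ := IH _ hcard' ({w}ᶜ : Set V) inferInstance
      (G.induce ({w}ᶜ : Set V)) rfl hT'
    have hNw : G.neighborFinset w = Finset.univ.erase w := by
      ext x
      simp only [SimpleGraph.mem_neighborFinset, Finset.mem_erase, Finset.mem_univ, and_true]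
      exact ⟨fun h => (G.ne_of_adj h).symm, fun h => hdom x h⟩
    have key0 : ∀ z : V → ℝ, (adjM G).mulVec z = μ • z → z w = 0 → z = 0 := by
      intro z hz hw0
      have hz' : (adjM (G.induce ({w}ᶜ : Set V))).mulVec (fun x => z x.val)
          = μ • (fun x : ({w}ᶜ : Set V) => z x.val) := by
        funext x
        erw [adjM, SimpleGraph.adjMatrix_mulVec_apply, induce_neighbor_sum]
        have hmem : w ∈ G.neighborFinset x.val := by
          rw [SimpleGraph.mem_neighborFinset]
          exact (hdom x.val (Set.mem_compl_singleton_iff.mp x.2)).symm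
        have hsplit := Finset.sum_erase_add _ z hmem
        rw [eig_apply hz x.val, hw0, add_zero] at hsplit
        rw [hsplit]
        simp
      have hsum' : ∑ x : ({w}ᶜ : Set V), z x.val = 0 := by
        rw [sum_subtype_ne w z, ← hNw, eig_apply hz w, hw0, mul_zero]
      have hz0 := IHa _ hz' hsum'
      funext x
      by_cases hx : x = w
      · exact hx ▸ hw0
      · exact congrFun hz0 ⟨x, by simp [hx]⟩
    constructor
    · intro z hz hsum
      have h := eig_apply hz w
      rw [hNw] at h
      have h2 := Finset.sum_erase_add Finset.univ z (Finset.mem_univ w)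
      rw [hsum, h] at h2
      have hzw0 : z w = 0 := by
        have hμ1 : μ + 1 ≠ 0 := fun hc => h1 (by linarith)
        have hmz : (μ + 1) * z w = 0 := by linear_combination h2
        exact (mul_eq_zero.mp hmz).resolve_left hμ1
      exact key0 z hz hzw0
    · exact fun _ => ⟨w, key0⟩

end ThrAux

/-- Every eigenvalue of a threshold graph other than 0 and -1 is simple. -/
theorem threshold_eigenvalue_simple {V : Type*} [Fintype V] (G : SimpleGraph V)
    (hG : IsThreshold G) (μ : ℝ) (hμ : HasEig G μ) (h0 : μ ≠ 0) (h1 : μ ≠ -1) :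
    eigMult G μ = 1 := by
  classical
  have hμ' : Module.End.eigenspace (Matrix.toLin' (adjM G)) μ ≠ ⊥ :=
    Module.End.hasEigenvalue_iff.mp hμ
  have hne : Nonempty V := by
    by_contra h
    have he : IsEmpty V := not_nonempty_iff.mp h
    apply hμ'
    apply (Submodule.eq_bot_iff _).mpr
    intro x _
    funext v
    exact (he.false v).elim
  obtain ⟨_, hB⟩ := ThrAux.key μ h0 h1 (Fintype.card V) V ‹_› G rfl hG
  obtain ⟨w, hw⟩ := hB hne
  have hmem : ∀ z : V → ℝ, z ∈ Module.End.eigenspace (Matrix.toLin' (adjM G)) μ ↔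
      (adjM G).mulVec z = μ • z := by
    intro z
    rw [Module.End.mem_eigenspace_iff, Matrix.toLin'_apply]
  have hub : eigMult G μ ≤ 1 := by
    have hf : Function.Injective
        ((LinearMap.proj w : (V → ℝ) →ₗ[ℝ] ℝ).comp
          (Submodule.subtype (Module.End.eigenspace (Matrix.toLin' (adjM G)) μ))) := by
      rw [injective_iff_map_eq_zero]
      intro x hx
      exact Subtype.ext (hw x.val ((hmem x.val).mp x.2) hx)
    have hle := LinearMap.finrank_le_finrank_of_injective hf
    simpa [eigMult] using hle
  have hlb : 1 ≤ eigMult G μ := by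
    have hnt : Nontrivial (Module.End.eigenspace (Matrix.toLin' (adjM G)) μ) :=
      Submodule.nontrivial_iff_ne_bot.mpr hμ'
    have := (Module.finrank_pos_iff (R := ℝ)).mpr hnt
    unfold eigMult
    omega
  omega
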